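/- Fix d ≥ 1 and for n ∈ ℕ let V_n be the complex inner-product space of functions from words of length n over {1,…,d} to ℂ, with standard orthonormal basis (e_w) indexed by such words; for subspaces A ⊆ V_m, B ⊆ V_n let A·B ⊆ V_{m+n} denote the span of the products a·b, where e_u·e_v := e_{uv} (concatenation) extended bilinearly. Call a family X = (X(n))_{n∈ℕ} of subspaces X(n) ⊆ V_n with X(0) = V_0 and X(m+n) ⊆ X(m)·X(n) for all m, n a standard subproduct system over ℂ^d. Suppose X is a standard subproduct system over ℂ^d such that: (1) for every n ≥ 1, X(n) is the span of a set of basis vectors {e_w : w ∈ A_n} for some set A_n of words of length n; and (2) for all m, n ∈ ℕ and every word α of length n with e_α ∈ X(n), there exist words β and γ of length m with e_{βα} ∈ X(m+n) and e_{αγ} ∈ X(m+n). Then there exists a nonempty closed shift-invariant subset Λ ⊆ {1,…,d}^ℤ such that X(n) = span{e_w : w ∈ Λⁿ} for every n ≥ 1. Moreover, X satisfies X(n) = ⋂_{i+j=n, i,j≥1} (X(i)·V_j) ∩ (V_i·X(j)) for all n > k+1 (i.e. X is the maximal standard subproduct system with prescribed fibers X(1),…,X(k+1)) if and only if Λ is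 a k-step subshift of finite type. -/

import Mathlib

noncomputable section

/-- The bilinear concatenation product determined by `e_u ⋆ e_v = e_{uv}`. -/
def wordMul {d m n : ℕ} (f : (Fin m → Fin d) → ℂ) (g : (Fin n → Fin d) → ℂ) :
    (Fin (m + n) → Fin d) → ℂ :=
  fun w => f (fun i => w (Fin.castAdd n i)) * g (fun j => w (Fin.natAdd m j))

/-- `A·B`: the span of the concatenation products of elements of `A` and `B`. -/
def prodSpan {d m n : ℕ} (A : Submodule ℂ ((Fin m → Fin d) → ℂ))
    (B : Submodule ℂ ((Fin n → Fin d) → ℂ)) :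
    Submodule ℂ ((Fin (m + n) → Fin d) → ℂ) :=
  Submodule.span ℂ {x | ∃ a ∈ A, ∃ b ∈ B, x = wordMul a b}

/-- Reindexing `V_m ≃ V_n` along an equality `m = n` of word lengths. -/
def castWords {d m n : ℕ} (h : m = n) :
    ((Fin m → Fin d) → ℂ) ≃ₗ[ℂ] ((Fin n → Fin d) → ℂ) := by
  subst h; exact LinearEquiv.refl ℂ _

/-- A finite word occurs as a block of consecutive entries of a bi-infinite sequence. -/
def OccursIn {d : ℕ} (w : List (Fin d)) (x : ℤ → Fin d) : Prop :=
  ∃ m : ℤ, ∀ i : Fin w.length, x (m + (i : ℕ)) = w.get i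

/-- The language of `Λ ⊆ {1,…,d}^ℤ`: all finite words occurring as blocks of points of `Λ`. -/
def lang {d : ℕ} (Λ : Set (ℤ → Fin d)) : Set (List (Fin d)) :=
  {w | ∃ x ∈ Λ, OccursIn w x}

/-- The left shift on `{1,…,d}^ℤ`. -/
def shiftSeq {d : ℕ} (x : ℤ → Fin d) : ℤ → Fin d := fun k => x (k + 1)

/-- `Λ` is a `k`-step subshift of finite type: it is the set of bi-infinite sequences
avoiding a finite set of forbidden nonempty words, each of length at most `k+1`. -/
def IsKStepSFT {d : ℕ} (k : ℕ) (Λ : Set (ℤ → Fin d)) : Prop :=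
  ∃ W : Set (List (Fin d)), W.Finite ∧ (∀ w ∈ W, w ≠ [] ∧ w.length ≤ k + 1) ∧
    Λ = {x | ∀ w ∈ W, ¬ OccursIn w x}


namespace SPS7

variable {d : ℕ}

def MS (n : ℕ) (S : Set (Fin n → Fin d)) : Submodule ℂ ((Fin n → Fin d) → ℂ) where
  carrier := {f | ∀ w, w ∉ S → f w = 0}
  add_mem' := fun hf hg w hw => by simp_all [Pi.add_apply]
  zero_mem' := fun w hw => rfl
  smul_mem' := fun c f hf w hw => by simp [hf w hw]

lemma mem_MS {n : ℕ} {S : Set (Fin n → Fin d)} {f} :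
    f ∈ MS n S ↔ ∀ w, w ∉ S → f w = 0 := Iff.rfl

lemma MS_univ {n : ℕ} : MS n (Set.univ : Set (Fin n → Fin d)) = ⊤ := by
  ext f; simp [mem_MS]

lemma single_mem_MS {n : ℕ} {S : Set (Fin n → Fin d)} {w} :
    Pi.single w (1:ℂ) ∈ MS n S ↔ w ∈ S := by
  constructor
  · intro h; by_contra hw
    have := h w hw; simp at this
  · intro hw v hv
    have hne : v ≠ w := fun e => hv (e ▸ hw)
    simp [Pi.single_apply, hne]

lemma sum_single (n : ℕ) (f : (Fin n → Fin d) → ℂ) :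
    f = ∑ w : Fin n → Fin d, f w • (Pi.single w (1:ℂ) : (Fin n → Fin d) → ℂ) := by
  funext v
  rw [Finset.sum_apply]
  simp [Pi.single_apply]

lemma span_single_eq_MS {n : ℕ} (S : Set (Fin n → Fin d)) :
    Submodule.span ℂ ((fun w => Pi.single w (1:ℂ)) '' S) = MS n S := by
  apply le_antisymm
  · rw [Submodule.span_le]
    rintro _ ⟨w, hw, rfl⟩
    exact single_mem_MS.mpr hw
  · intro f hf
    rw [sum_single n f]
    refine Submodule.sum_mem _ fun w _ => ?_
    by_cases hw : w ∈ S
    · exact Submodule.smul_mem _ _ (Submodule.subset_span ⟨w, hw, rfl⟩)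
    · rw [hf w hw]; simp

lemma append_parts {m n : ℕ} {α : Type*} (w : Fin (m+n) → α) :
    Fin.append (fun i => w (Fin.castAdd n i)) (fun j => w (Fin.natAdd m j)) = w := by
  funext i
  refine Fin.addCases (fun i => ?_) (fun j => ?_) i
  · rw [Fin.append_left]
  · rw [Fin.append_right]

lemma eq_append_iff {m n : ℕ} {α : Type*} {w : Fin (m+n) → α} {u : Fin m → α} {v : Fin n → α} :
    w = Fin.append u v ↔
      ((fun i => w (Fin.castAdd n i)) = u ∧ (fun j => w (Fin.natAdd m j)) = v) := by
  constructor
  · rintro rfl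
    constructor <;> funext i
    · rw [Fin.append_left]
    · rw [Fin.append_right]
  · rintro ⟨h1, h2⟩
    rw [← h1, ← h2]; exact (append_parts w).symm

lemma wordMul_single {m n : ℕ} (u : Fin m → Fin d) (v : Fin n → Fin d) :
    wordMul (Pi.single u (1:ℂ)) (Pi.single v 1) = Pi.single (Fin.append u v) 1 := by
  funext w
  simp only [wordMul, Pi.single_apply]
  by_cases h : w = Fin.append u v
  · rw [if_pos (eq_append_iff.mp h).1, if_pos (eq_append_iff.mp h).2, if_pos h, one_mul]
  · rw [if_neg h]
    rcases (not_and_or.mp (fun hc => h (eq_append_iff.mpr hc))) with h' | h'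
    · rw [if_neg h', zero_mul]
    · rw [if_neg h', mul_zero]

lemma prodSpan_MS {m n : ℕ} (S : Set (Fin m → Fin d)) (T : Set (Fin n → Fin d)) :
    prodSpan (MS m S) (MS n T) =
      MS (m+n) {w | (fun i => w (Fin.castAdd n i)) ∈ S ∧ (fun j => w (Fin.natAdd m j)) ∈ T} := by
  apply le_antisymm
  · rw [prodSpan, Submodule.span_le]
    rintro _ ⟨a, ha, b, hb, rfl⟩ w hw
    rcases not_and_or.mp hw with h | h
    · simp only [wordMul, ha _ h, zero_mul]
    · simp only [wordMul, hb _ h, mul_zero]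
  · intro f hf
    rw [sum_single (m+n) f]
    refine Submodule.sum_mem _ fun w _ => ?_
    by_cases hw : w ∈ {w : Fin (m+n) → Fin d |
        (fun i => w (Fin.castAdd n i)) ∈ S ∧ (fun j => w (Fin.natAdd m j)) ∈ T}
    · refine Submodule.smul_mem _ _ (Submodule.subset_span ?_)
      refine ⟨Pi.single (fun i => w (Fin.castAdd n i)) 1, single_mem_MS.mpr hw.1,
        Pi.single (fun j => w (Fin.natAdd m j)) 1, single_mem_MS.mpr hw.2, ?_⟩
      rw [wordMul_single, append_parts]
    · rw [hf w hw]; simp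

lemma castWords_symm_apply {m n : ℕ} (h : m = n) (f : (Fin n → Fin d) → ℂ)
    (w : Fin m → Fin d) :
    (castWords h).symm f w = f (fun i => w (Fin.cast h.symm i)) := by
  subst h; rfl


variable {d : ℕ}

def blockOf (x : ℤ → Fin d) (p : ℤ) (N : ℕ) : Fin N → Fin d := fun i => x (p + (i : ℕ))

lemma continuous_blockOf (p : ℤ) (N : ℕ) :
    Continuous (fun x : ℤ → Fin d => blockOf x p N) := by
  apply continuous_pi
  intro i
  show Continuous fun x : ℤ → Fin d => x (p + ((i : ℕ) : ℤ))
  exact continuous_apply _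

def Lam (L : ∀ n, Set (Fin n → Fin d)) : Set (ℤ → Fin d) :=
  {x | ∀ (N : ℕ) (p : ℤ), blockOf x p N ∈ L N}

variable {L : ∀ n, Set (Fin n → Fin d)}

lemma L_cast {m n : ℕ} (h : m = n) {w : Fin m → Fin d} (hw : w ∈ L m) :
    (fun i => w (Fin.cast h.symm i)) ∈ L n := by subst h; exact hw

section Factor
variable (hpre : ∀ m n (w : Fin (m+n) → Fin d), w ∈ L (m+n) → (fun i => w (Fin.castAdd n i)) ∈ L m)
variable (hsuf : ∀ m n (w : Fin (m+n) → Fin d), w ∈ L (m+n) → (fun j => w (Fin.natAdd m j)) ∈ L n)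

include hpre hsuf in
lemma L_factor (a b c : ℕ) (w : Fin (a+b+c) → Fin d) (hw : w ∈ L (a+b+c)) :
    (fun i : Fin b => w ⟨a + i, by have := i.isLt; omega⟩) ∈ L b := by
  have h1 := hpre (a+b) c w hw
  have h2 := hsuf a b _ h1
  have he : (fun j : Fin b => w (Fin.castAdd c (Fin.natAdd a j)))
      = (fun i : Fin b => w ⟨a + i, by have := i.isLt; omega⟩) := by
    funext j; rfl
  rw [← he]; exact h2

include hpre hsuf in
lemma block_factor {x : ℤ → Fin d} {p : ℤ} {N : ℕ} (hN : blockOf x p N ∈ L N) {q : ℤ} {n : ℕ}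
    (hpq : p ≤ q) (hqn : q + n ≤ p + N) : blockOf x q n ∈ L n := by
  obtain ⟨a, ha⟩ : ∃ a : ℕ, (q : ℤ) = p + a := ⟨(q - p).toNat, by omega⟩
  obtain ⟨c, hc⟩ : ∃ c : ℕ, N = a + n + c := ⟨N - a - n, by omega⟩
  have hw := L_cast hc hN
  have h2 := L_factor hpre hsuf a n c _ hw
  have he : (fun i : Fin n => (fun i => blockOf x p N (Fin.cast hc.symm i))
        ⟨a + i, by have := i.isLt; omega⟩) = blockOf x q n := by
    funext i
    show x _ = x _
    congr 1
    simp only [Fin.coe_cast]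
    push_cast
    omega
  rw [← he]; exact h2
end Factor

lemma isClosed_block_pre (p : ℤ) (N : ℕ) (S : Set (Fin N → Fin d)) :
    IsClosed {x : ℤ → Fin d | blockOf x p N ∈ S} := by
  have he : {x : ℤ → Fin d | blockOf x p N ∈ S} = (fun x => blockOf x p N) ⁻¹' S := rfl
  rw [he]
  exact (isClosed_discrete S).preimage (continuous_blockOf p N)

lemma isClosed_Lam : IsClosed (Lam L) := by
  have he : Lam L = ⋂ (N : ℕ), ⋂ (p : ℤ), {x | blockOf x p N ∈ L N} := by
    ext x; simp [Lam, Set.mem_iInter]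
  rw [he]
  exact isClosed_iInter fun N => isClosed_iInter fun p => isClosed_block_pre _ _ _

lemma exists_point
    (hpre : ∀ m n (w : Fin (m+n) → Fin d), w ∈ L (m+n) → (fun i => w (Fin.castAdd n i)) ∈ L m)
    (hsuf : ∀ m n (w : Fin (m+n) → Fin d), w ∈ L (m+n) → (fun j => w (Fin.natAdd m j)) ∈ L n)
    (hext : ∀ m n (α : Fin n → Fin d), α ∈ L n →
      ∃ β γ : Fin m → Fin d, Fin.append β α ∈ L (m+n) ∧ Fin.append α γ ∈ L (n+m))
    {n : ℕ} (hn : 1 ≤ n) {w : Fin n → Fin d} (hw : w ∈ L n) :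
    ∃ x, x ∈ Lam L ∧ blockOf x 0 n = w := by
  classical
  -- double extension
  have hdouble : ∀ m : ℕ, ∃ u : Fin (m+n+m) → Fin d, u ∈ L (m+n+m) ∧
      ∀ i : Fin n, u ⟨m + i, by have := i.isLt; omega⟩ = w i := by
    intro m
    obtain ⟨β, -, hβ, -⟩ := hext m n w hw
    obtain ⟨-, γ, -, hγ⟩ := hext m (m+n) (Fin.append β w) hβ
    refine ⟨Fin.append (Fin.append β w) γ, hγ, fun i => ?_⟩
    have he : (⟨m + i, by have := i.isLt; omega⟩ : Fin (m+n+m))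
        = Fin.castAdd m (Fin.natAdd m i) := by ext; simp
    rw [he, Fin.append_left, Fin.append_right]
  set D : ℕ → Set (ℤ → Fin d) := fun m =>
    {x | blockOf x (-(m:ℤ)) (m+n+m) ∈ L (m+n+m) ∧ blockOf x 0 n = w} with hD
  have hclosed : ∀ m, IsClosed (D m) := by
    intro m
    have h2 : IsClosed ((fun x : ℤ → Fin d => blockOf x 0 n) ⁻¹' {w}) :=
      (isClosed_discrete _).preimage (continuous_blockOf 0 n)
    exact (isClosed_block_pre _ _ _).inter h2
  have hne : ∀ m, (D m).Nonempty := by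
    intro m
    obtain ⟨u, hu, hmid⟩ := hdouble m
    refine ⟨fun j => u ⟨min (m+n+m-1) (j+m).toNat, by omega⟩, ?_, ?_⟩
    · show blockOf _ _ _ ∈ L (m+n+m)
      have he : blockOf (fun j : ℤ => u ⟨min (m+n+m-1) (j+m).toNat, by omega⟩)
          (-(m:ℤ)) (m+n+m) = u := by
        funext i
        show u _ = u i
        congr 1
        ext
        simp only []
        have := i.isLt
        omega
      rw [he]; exact hu
    · funext i
      show u _ = w i
      rw [← hmid i]
      congr 1
      ext
      simp only []
      have := i.isLt
      omega
  have hstep : ∀ m, D (m+1) ⊆ D m := by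
    intro m x hx
    refine ⟨?_, hx.2⟩
    refine block_factor hpre hsuf hx.1 (by push_cast; omega) (by push_cast; omega)
  have hanti : ∀ i j, i ≤ j → D j ⊆ D i := by
    intro i j hij
    induction hij with
    | refl => exact subset_rfl
    | step h ih => exact (hstep _).trans ih
  have hdir : Directed (fun x1 x2 : Set (ℤ → Fin d) => x1 ⊇ x2) D :=
    fun i j => ⟨max i j, hanti _ _ (le_max_left _ _), hanti _ _ (le_max_right _ _)⟩
  obtain ⟨x, hx⟩ := IsCompact.nonempty_iInter_of_directed_nonempty_isCompact_isClosed
    D hdir hne (fun m => (hclosed m).isCompact) hclosed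
  simp only [Set.mem_iInter] at hx
  refine ⟨x, ?_, (hx 0).2⟩
  intro N p
  have hm := (hx (p.natAbs + N)).1
  refine block_factor hpre hsuf hm (by omega) (by omega)


variable {d : ℕ}

lemma occ_ofFn {n : ℕ} {w : Fin n → Fin d} {x : ℤ → Fin d} :
    OccursIn (List.ofFn w) x ↔ ∃ m : ℤ, blockOf x m n = w := by
  have hlen : (List.ofFn w).length = n := List.length_ofFn
  constructor
  · rintro ⟨m, hm⟩
    refine ⟨m, funext fun i => ?_⟩
    have h := hm (Fin.cast hlen.symm i)
    rw [List.get_ofFn] at h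
    have e2 : Fin.cast hlen (Fin.cast hlen.symm i) = i := by ext; simp
    rw [e2] at h
    have e1 : ((Fin.cast hlen.symm i : Fin (List.ofFn w).length) : ℕ) = (i : ℕ) :=
      Fin.coe_cast _ _
    rw [e1] at h
    exact h
  · rintro ⟨m, hm⟩
    refine ⟨m, fun i => ?_⟩
    rw [List.get_ofFn]
    exact congrFun hm (Fin.cast hlen i)

lemma glue {k n : ℕ} (W : Set (List (Fin d))) (hWlen : ∀ v ∈ W, v ≠ [] ∧ v.length ≤ k+1)
    (hn : k + 1 < n) (w : Fin n → Fin d)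
    {x y : ℤ → Fin d} (hx : ∀ v ∈ W, ¬ OccursIn v x) (hy : ∀ v ∈ W, ¬ OccursIn v y)
    {a b : ℤ}
    (hxa : ∀ i : Fin n, (i : ℕ) < n - 1 → x (a + (i:ℕ)) = w i)
    (hyb : ∀ i : Fin n, 1 ≤ (i : ℕ) → y (b + (i:ℕ) - 1) = w i) :
    ∃ z : ℤ → Fin d, (∀ v ∈ W, ¬ OccursIn v z) ∧ blockOf z 0 n = w := by
  classical
  set z : ℤ → Fin d := fun j => if j ≤ (n:ℤ) - 2 then x (a + j) else y (b + j - 1) with hz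
  have hn2 : 2 ≤ n := by omega
  have hzw : ∀ i : Fin n, z ((i:ℕ) : ℤ) = w i := by
    intro i
    by_cases hi : ((i:ℕ) : ℤ) ≤ (n:ℤ) - 2
    · rw [hz]
      simp only [if_pos hi]
      exact hxa i (by omega)
    · rw [hz]
      simp only [if_neg hi]
      exact hyb i (by have := i.isLt; omega)
  refine ⟨z, ?_, funext fun i => by show z (0 + ((i:ℕ):ℤ)) = w i; rw [zero_add]; exact hzw i⟩
  intro v hv ⟨m, hm⟩
  obtain ⟨hvne, hvlen⟩ := hWlen v hv
  have hl1 : 1 ≤ v.length := List.length_pos_iff.mpr hvne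
  have hln : (v.length : ℤ) ≤ (n:ℤ) - 1 := by
    have : v.length ≤ k + 1 := hvlen
    omega
  by_cases hcase : m + v.length - 1 ≤ (n:ℤ) - 2
  · refine hx v hv ⟨a + m, fun i => ?_⟩
    have hi : m + (i:ℕ) ≤ (n:ℤ) - 2 := by have := i.isLt; omega
    have := hm i
    rw [hz] at this
    simp only [if_pos hi] at this
    rw [← this]
    congr 1
    ring
  · -- occurrence sits in the y part
    have hm1 : 1 ≤ m := by have := hl1; omega
    refine hy v hv ⟨b + m - 1, fun i => ?_⟩
    have hpos : 1 ≤ m + (i:ℕ) := by have := i.isLt; omega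
    have key : z (m + (i:ℕ)) = y (b + (m + (i:ℕ)) - 1) := by
      by_cases hj : m + (i:ℕ) ≤ (n:ℤ) - 2
      · rw [hz]
        simp only [if_pos hj]
        set i0 : Fin n := ⟨(m + (i:ℕ)).toNat, by omega⟩ with hi0
        have e : (((i0:ℕ)) : ℤ) = m + (i:ℕ) := by rw [hi0]; simp; omega
        have h1 := hxa i0 (by rw [hi0]; simp; omega)
        have h2 := hyb i0 (by rw [hi0]; simp; omega)
        rw [e] at h1 h2
        rw [h1, h2]
      · rw [hz]; simp only [if_neg hj]
    have := hm i
    rw [key] at this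
    rw [← this]
    congr 1
    ring


lemma prodSpan_MS_top_right {d m n : ℕ} (S : Set (Fin m → Fin d)) :
    prodSpan (MS m S) (⊤ : Submodule ℂ ((Fin n → Fin d) → ℂ))
      = MS (m+n) {w | (fun i => w (Fin.castAdd n i)) ∈ S} := by
  rw [← MS_univ (n := n), prodSpan_MS]
  congr 1
  ext w
  simp

lemma prodSpan_MS_top_left {d m n : ℕ} (T : Set (Fin n → Fin d)) :
    prodSpan (⊤ : Submodule ℂ ((Fin m → Fin d) → ℂ)) (MS n T)
      = MS (m+n) {w | (fun j => w (Fin.natAdd m j)) ∈ T} := by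
  rw [← MS_univ (n := m), prodSpan_MS]
  congr 1
  ext w
  simp

end SPS7

/-- **Standard subproduct systems spanned by words come from subshifts.**
A standard subproduct system over `ℂ^d` whose fibers are spanned by basis vectors `e_w`,
and whose admissible words extend on both sides, is of the form `X_Λ` for a subshift
`Λ ⊆ {1,…,d}^ℤ`; and it is the maximal standard subproduct system with prescribed fibers
`X(1), …, X(k+1)` if and only if `Λ` is a `k`-step subshift of finite type. -/
theorem stmt7 (d k : ℕ) (hd : 1 ≤ d)
    (X : (n : ℕ) → Submodule ℂ ((Fin n → Fin d) → ℂ))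
    (hX0 : X 0 = ⊤)
    (hXsub : ∀ m n : ℕ, X (m + n) ≤ prodSpan (X m) (X n))
    (h1 : ∀ n : ℕ, 1 ≤ n → ∃ A : Set (Fin n → Fin d),
      X n = Submodule.span ℂ ((fun w => Pi.single w (1 : ℂ)) '' A))
    (h2 : ∀ m n : ℕ, ∀ α : Fin n → Fin d, Pi.single α (1 : ℂ) ∈ X n →
      ∃ β γ : Fin m → Fin d,
        Pi.single (Fin.append β α) (1 : ℂ) ∈ X (m + n) ∧
        Pi.single (Fin.append α γ) (1 : ℂ) ∈ X (n + m)) :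
    ∃ Λ : Set (ℤ → Fin d),
      Λ.Nonempty ∧ IsClosed Λ ∧ shiftSeq '' Λ = Λ ∧
      (∀ n : ℕ, 1 ≤ n →
        X n = Submodule.span ℂ
          ((fun w => Pi.single w (1 : ℂ)) '' {w : Fin n → Fin d | List.ofFn w ∈ lang Λ})) ∧
      ((∀ n : ℕ, k + 1 < n → ∀ f : (Fin n → Fin d) → ℂ,
          (f ∈ X n ↔ ∀ (i j : ℕ) (hij : i + j = n), 1 ≤ i → 1 ≤ j →
            (castWords hij).symm f ∈ prodSpan (X i) ⊤ ⊓ prodSpan ⊤ (X j))) ↔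
        IsKStepSFT k Λ) := by
  classical
  set L : ∀ n, Set (Fin n → Fin d) := fun n => {w | Pi.single w (1:ℂ) ∈ X n} with hL
  -- X n is the span of the basis vectors indexed by L n
  have hXM : ∀ n, X n = SPS7.MS n (L n) := by
    intro n
    rcases Nat.eq_zero_or_pos n with rfl | hn
    · have hL0 : L 0 = Set.univ := by
        ext w; simp only [hL, Set.mem_setOf_eq, Set.mem_univ, iff_true, hX0, Submodule.mem_top]
      rw [hX0, hL0, SPS7.MS_univ]
    · obtain ⟨A, hA⟩ := h1 n hn
      have hLA : L n = A := by
        ext w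
        simp only [hL, Set.mem_setOf_eq]
        rw [hA, SPS7.span_single_eq_MS]
        exact SPS7.single_mem_MS
      rw [hA, hLA, SPS7.span_single_eq_MS]
  have hmemL : ∀ n (w : Fin n → Fin d), w ∈ L n ↔ Pi.single w (1:ℂ) ∈ X n := by
    intro n w; rw [hL]; exact Iff.rfl
  -- prefix / suffix closure
  have hprefsuf : ∀ m n : ℕ, ∀ w : Fin (m+n) → Fin d, w ∈ L (m+n) →
      (fun i => w (Fin.castAdd n i)) ∈ L m ∧ (fun j => w (Fin.natAdd m j)) ∈ L n := by
    intro m n w hw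
    have h2' : Pi.single w (1:ℂ) ∈ prodSpan (X m) (X n) := hXsub m n ((hmemL _ w).mp hw)
    rw [hXM m, hXM n, SPS7.prodSpan_MS] at h2'
    have := SPS7.single_mem_MS.mp h2'
    exact ⟨(hmemL _ _).mpr ((hmemL _ _).mp this.1), this.2⟩
  have hpre : ∀ m n : ℕ, ∀ w : Fin (m+n) → Fin d, w ∈ L (m+n) →
      (fun i => w (Fin.castAdd n i)) ∈ L m := fun m n w hw => (hprefsuf m n w hw).1
  have hsuf : ∀ m n : ℕ, ∀ w : Fin (m+n) → Fin d, w ∈ L (m+n) →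
      (fun j => w (Fin.natAdd m j)) ∈ L n := fun m n w hw => (hprefsuf m n w hw).2
  -- extension
  have hext : ∀ m n : ℕ, ∀ α : Fin n → Fin d, α ∈ L n →
      ∃ β γ : Fin m → Fin d, Fin.append β α ∈ L (m+n) ∧ Fin.append α γ ∈ L (n+m) := by
    intro m n α hα
    obtain ⟨β, γ, hβ, hγ⟩ := h2 m n α ((hmemL _ _).mp hα)
    exact ⟨β, γ, (hmemL _ _).mpr hβ, (hmemL _ _).mpr hγ⟩
  -- membership extensionality helper
  have hLext : ∀ (N : ℕ) (u v : Fin N → Fin d), (∀ t, u t = v t) → u ∈ L N → v ∈ L N :=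
    fun N u v h hu => (funext h : u = v) ▸ hu
  -- general factor lemma
  have hfac : ∀ (N : ℕ) (w : Fin N → Fin d), w ∈ L N → ∀ (a b : ℕ) (hab : a + b ≤ N),
      (fun t : Fin b => w ⟨a + t, by have := t.isLt; omega⟩) ∈ L b := by
    intro N w hw a b hab
    obtain ⟨c, hc⟩ : ∃ c, N = a + b + c := ⟨N - a - b, by omega⟩
    have hW := SPS7.L_cast (L := L) hc hw
    have h2' := SPS7.L_factor (L := L) hpre hsuf a b c _ hW
    exact h2'
  -- the empty word
  have he0 : ∀ w : Fin 0 → Fin d, w ∈ L 0 := by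
    intro w
    rw [hmemL]
    rw [hX0]
    exact Submodule.mem_top
  -- nonemptiness of each L n
  have hLne : ∀ n, (L n).Nonempty := by
    intro n
    obtain ⟨β, γ, hβ, -⟩ := hext n 0 (fun i => i.elim0) (he0 _)
    exact ⟨Fin.append β (fun i => i.elim0), hβ⟩
  set Λ : Set (ℤ → Fin d) := SPS7.Lam L with hΛ
  -- language characterization
  have hlangL : ∀ n, 1 ≤ n → ∀ w : Fin n → Fin d, (List.ofFn w ∈ lang Λ ↔ w ∈ L n) := by
    intro n hn w
    constructor
    · rintro ⟨x, hxΛ, hocc⟩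
      obtain ⟨m, hm⟩ := SPS7.occ_ofFn.mp hocc
      rw [← hm]
      exact hxΛ n m
    · intro hw
      obtain ⟨x, hxΛ, hb⟩ := SPS7.exists_point hpre hsuf hext hn hw
      exact ⟨x, hxΛ, SPS7.occ_ofFn.mpr ⟨0, hb⟩⟩
  refine ⟨Λ, ?_, SPS7.isClosed_Lam, ?_, ?_, ?_⟩
  · -- nonempty
    obtain ⟨w, hw⟩ := hLne 1
    obtain ⟨x, hxΛ, -⟩ := SPS7.exists_point hpre hsuf hext le_rfl hw
    exact ⟨x, hxΛ⟩
  · -- shift invariance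
    have hblk : ∀ (x : ℤ → Fin d) (p : ℤ) (N : ℕ),
        SPS7.blockOf (shiftSeq x) p N = SPS7.blockOf x (p+1) N := by
      intro x p N
      funext i
      show x (p + (i:ℕ) + 1) = x ((p + 1) + (i:ℕ))
      congr 1
      ring
    apply Set.eq_of_subset_of_subset
    · rintro _ ⟨x, hx, rfl⟩ N p
      rw [hblk]
      exact hx N (p+1)
    · intro y hy
      refine ⟨fun j => y (j - 1), ?_, ?_⟩
      · intro N p
        have he : SPS7.blockOf (fun j => y (j - 1)) p N = SPS7.blockOf y (p-1) N := by
          funext i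
          show y (p + (i:ℕ) - 1) = y ((p-1) + (i:ℕ))
          congr 1
          ring
        rw [he]
        exact hy N (p-1)
      · funext j
        show y (j + 1 - 1) = y j
        congr 1
        ring
  · -- span characterization
    intro n hn
    have hset : {w : Fin n → Fin d | List.ofFn w ∈ lang Λ} = L n :=
      Set.ext fun w => hlangL n hn w
    rw [hset, SPS7.span_single_eq_MS]
    exact hXM n
  · -- maximality iff SFT
    -- word-level maximality
    set Pw : Prop := ∀ n : ℕ, k + 1 < n → ∀ w : Fin n → Fin d,
      ((fun t : Fin (n-1) => w ⟨(t:ℕ), by have := t.isLt; omega⟩) ∈ L (n-1) ∧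
       (fun t : Fin (n-1) => w ⟨1 + (t:ℕ), by have := t.isLt; omega⟩) ∈ L (n-1)) →
      w ∈ L n with hPw
    have e1 : ∀ (i j : ℕ), prodSpan (X i) (⊤ : Submodule ℂ ((Fin j → Fin d) → ℂ))
        = SPS7.MS (i+j) {v : Fin (i+j) → Fin d | (fun a => v (Fin.castAdd j a)) ∈ L i} := by
      intro i j
      rw [hXM i, SPS7.prodSpan_MS_top_right]
    have e2 : ∀ (i j : ℕ), prodSpan (⊤ : Submodule ℂ ((Fin i → Fin d) → ℂ)) (X j)
        = SPS7.MS (i+j) {v : Fin (i+j) → Fin d | (fun b => v (Fin.natAdd i b)) ∈ L j} := by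
      intro i j
      rw [hXM j, SPS7.prodSpan_MS_top_left]
    -- the P ↔ Pw bridge
    have hP_iff_Pw : (∀ n : ℕ, k + 1 < n → ∀ f : (Fin n → Fin d) → ℂ,
          (f ∈ X n ↔ ∀ (i j : ℕ) (hij : i + j = n), 1 ≤ i → 1 ≤ j →
            (castWords hij).symm f ∈ prodSpan (X i) ⊤ ⊓ prodSpan ⊤ (X j))) ↔ Pw := by
      constructor
      · -- P → Pw
        intro hP
        intro n hn w hw
        obtain ⟨hwpre, hwsuf⟩ := hw
        rw [hmemL]
        refine (hP n hn (Pi.single w (1:ℂ))).mpr ?_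
        intro i j hij hi hj
        rw [Submodule.mem_inf, e1 i j, e2 i j]
        constructor
        · intro v hv
          rw [SPS7.castWords_symm_apply, Pi.single_apply]
          rw [if_neg]
          intro hvw
          apply hv
          -- prefix of v is a prefix of w, in L i
          have hfac1 := hfac (n-1) _ hwpre 0 i (by omega)
          have hv1 : (fun a : Fin i => v (Fin.castAdd j a))
              = (fun a : Fin i => w ⟨(a:ℕ), by have := a.isLt; omega⟩) := by
            funext a
            have := congrFun hvw (Fin.cast hij (Fin.castAdd j a))
            exact this
          show (fun a : Fin i => v (Fin.castAdd j a)) ∈ L i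
          rw [hv1]
          refine hLext i _ _ (fun t => ?_) hfac1
          congr 1
          ext
          show 0 + (t:ℕ) = (t:ℕ)
          omega
        · intro v hv
          rw [SPS7.castWords_symm_apply, Pi.single_apply]
          rw [if_neg]
          intro hvw
          apply hv
          have hfac2 := hfac (n-1) _ hwsuf (i-1) j (by omega)
          have hv2 : (fun b : Fin j => v (Fin.natAdd i b))
              = (fun b : Fin j => w ⟨i + (b:ℕ), by have := b.isLt; omega⟩) := by
            funext b
            have := congrFun hvw (Fin.cast hij (Fin.natAdd i b))
            exact this
          show (fun b : Fin j => v (Fin.natAdd i b)) ∈ L j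
          rw [hv2]
          refine hLext j _ _ (fun t => ?_) hfac2
          congr 1
          ext
          simp only [Fin.coe_natAdd]
          omega
      · -- Pw → P
        intro hPw' n hn f
        constructor
        · -- forward: always true
          intro hf i j hij hi hj
          rw [hXM n] at hf
          rw [Submodule.mem_inf, e1 i j, e2 i j]
          constructor
          · intro v hv
            rw [SPS7.castWords_symm_apply]
            by_contra hne
            apply hv
            have hvL : (fun a : Fin n => v (Fin.cast hij.symm a)) ∈ L n := by
              by_contra hc
              exact hne (hf _ hc)
            have hvL' : v ∈ L (i+j) := by
              have := SPS7.L_cast (L := L) hij.symm hvL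
              exact this
            have := hfac (i+j) v hvL' 0 i (by omega)
            show (fun a : Fin i => v (Fin.castAdd j a)) ∈ L i
            refine hLext i _ _ (fun t => ?_) this
            congr 1
            ext
            simp only [Fin.coe_castAdd]
            omega
          · intro v hv
            rw [SPS7.castWords_symm_apply]
            by_contra hne
            apply hv
            have hvL : (fun a : Fin n => v (Fin.cast hij.symm a)) ∈ L n := by
              by_contra hc
              exact hne (hf _ hc)
            have hvL' : v ∈ L (i+j) := by
              have := SPS7.L_cast (L := L) hij.symm hvL
              exact this
            have := hfac (i+j) v hvL' i j (by omega)
            show (fun b : Fin j => v (Fin.natAdd i b)) ∈ L j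
            refine hLext j _ _ (fun t => ?_) this
            congr 1
        · -- backward: uses Pw
          intro hrhs
          rw [hXM n]
          intro w hw
          by_contra hfw
          apply hw
          apply hPw' n hn w
          have hij1 : (n-1) + 1 = n := by omega
          have hij2 : 1 + (n-1) = n := by omega
          constructor
          · have hm := (hrhs (n-1) 1 hij1 (by omega) le_rfl).1
            rw [e1 (n-1) 1] at hm
            by_contra hc
            refine hfw ?_
            have := hm (fun b : Fin ((n-1)+1) => w (Fin.cast hij1 b)) ?_
            · rw [SPS7.castWords_symm_apply] at this
              exact this
            · intro hcc
              apply hc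
              refine hLext (n-1) _ _ (fun t => ?_) hcc
              congr 1
          · have hm := (hrhs 1 (n-1) hij2 le_rfl (by omega)).2
            rw [e2 1 (n-1)] at hm
            by_contra hc
            refine hfw ?_
            have := hm (fun b : Fin (1+(n-1)) => w (Fin.cast hij2 b)) ?_
            · rw [SPS7.castWords_symm_apply] at this
              exact this
            · intro hcc
              apply hc
              refine hLext (n-1) _ _ (fun t => ?_) hcc
              congr 1
        -- end Pw → P
    rw [hP_iff_Pw]
    -- now: Pw ↔ IsKStepSFT k Λ
    constructor
    · -- Pw → SFT
      intro hPw'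
      refine ⟨{l : List (Fin d) | l ≠ [] ∧ l.length ≤ k + 1 ∧ l.get ∉ L l.length},
        ?_, fun v hv => ⟨hv.1, hv.2.1⟩, ?_⟩
      · exact (List.finite_length_le (Fin d) (k+1)).subset (fun l hl => hl.2.1)
      · apply Set.eq_of_subset_of_subset
        · intro x hx v hv hocc
          obtain ⟨m, hm⟩ := hocc
          apply hv.2.2
          have : SPS7.blockOf x m v.length = v.get := funext fun i => hm i
          rw [← this]
          exact hx v.length m
        · intro x hx
          intro N
          induction N using Nat.strong_induction_on with
          | _ N IH =>
            intro p
            rcases Nat.eq_zero_or_pos N with rfl | hN1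
            · exact hLext 0 _ _ (fun t => t.elim0) (he0 (fun i => i.elim0))
            rcases le_or_gt N (k+1) with hNk | hNk
            · by_contra hc
              set l : List (Fin d) := List.ofFn (SPS7.blockOf x p N) with hl
              have hlen : l.length = N := List.length_ofFn
              have hlW : l ∈ {l : List (Fin d) | l ≠ [] ∧ l.length ≤ k + 1 ∧
                  l.get ∉ L l.length} := by
                refine ⟨?_, by omega, ?_⟩
                · intro hnil
                  rw [hnil] at hlen
                  simp at hlen
                  omega
                · intro hget
                  apply hc
                  have := SPS7.L_cast (L := L) hlen hget
                  refine hLext N _ _ (fun t => ?_) this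
                  rw [List.get_ofFn]
                  rfl
              refine hx l hlW ⟨p, fun i => ?_⟩
              rw [List.get_ofFn]
              rfl
            · -- N > k+1 : use Pw
              apply hPw' N hNk
              constructor
              · have := IH (N-1) (by omega) p
                refine hLext (N-1) _ _ (fun t => ?_) this
                rfl
              · have := IH (N-1) (by omega) (p+1)
                refine hLext (N-1) _ _ (fun t => ?_) this
                show x ((p+1) + (t:ℕ)) = x (p + ((1 + (t:ℕ) : ℕ) : ℤ))
                congr 1
                push_cast
                ring
    · -- SFT → Pw
      rintro ⟨W, hWfin, hWlen, hWeq⟩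
      intro n hn w hw
      obtain ⟨hwpre, hwsuf⟩ := hw
      have hn1 : 1 ≤ n - 1 := by omega
      obtain ⟨x, hxΛ, hbx⟩ := SPS7.exists_point hpre hsuf hext hn1 hwpre
      obtain ⟨y, hyΛ, hby⟩ := SPS7.exists_point hpre hsuf hext hn1 hwsuf
      have hx' : ∀ v ∈ W, ¬ OccursIn v x := by
        have hx0 : x ∈ Λ := hxΛ
        rw [hWeq] at hx0
        exact hx0
      have hy' : ∀ v ∈ W, ¬ OccursIn v y := by
        have hy0 : y ∈ Λ := hyΛ
        rw [hWeq] at hy0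
        exact hy0
      have hxa : ∀ i : Fin n, (i : ℕ) < n - 1 → x ((0:ℤ) + (i:ℕ)) = w i := by
        intro i hi
        have h := congrFun hbx (⟨(i:ℕ), hi⟩ : Fin (n-1))
        exact h
      have hyb : ∀ i : Fin n, 1 ≤ (i : ℕ) → y ((0:ℤ) + (i:ℕ) - 1) = w i := by
        intro i hi
        have hlt : (i:ℕ) - 1 < n - 1 := by have := i.isLt; omega
        have h2 : y ((0:ℤ) + (((i:ℕ) - 1 : ℕ) : ℤ)) = w i := by
          have h := congrFun hby (⟨(i:ℕ) - 1, hlt⟩ : Fin (n-1))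
          convert h using 2
          congr 1
          ext
          simp only [Fin.val_mk]
          omega
        rw [← h2]
        congr 1
        omega
      obtain ⟨z, hz, hzw⟩ := SPS7.glue W hWlen hn w hx' hy' hxa hyb
      have hzΛ : z ∈ Λ := by
        rw [hWeq]
        exact hz
      rw [← hzw]
      exact hzΛ n 0
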